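/- Let k be a field of characteristic p > 0 and n ≥ 1. Let Q be the p^n × p^n matrix over k[X] = k[x₁,…,xₙ] indexed by multiindices α,β ∈ [0,p−1]^n with entries Q_{αβ} = ∂^α X^β, where ∂^α = ∂₁^{α₁}⋯∂ₙ^{αₙ} is the composite of partial derivatives and X^β = ∏ᵢ xᵢ^{βᵢ}. Then det Q = c_p^n, where c_p = ∏_{k=1}^{p−1} k! (a nonzero element of k). -/

import Mathlib

open MvPolynomial

section aux

variable {R : Type*} [CommSemiring R] {n : ℕ}

lemma iter_pderiv_monomial (i : Fin n) (a : ℕ) (s : Fin n →₀ ℕ) (c : R) :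
    (⇑(pderiv i))^[a] (monomial s c : MvPolynomial (Fin n) R)
      = monomial (s - Finsupp.single i a) (c * ((s i).descFactorial a : R)) := by
  induction a generalizing s c with
  | zero => simp
  | succ a ih =>
    rw [Function.iterate_succ_apply, pderiv_monomial, ih]
    congr 1
    · rw [tsub_tsub, ← Finsupp.single_add, Nat.add_comm]
    · rw [mul_assoc]
      congr 1
      rw [Finsupp.tsub_apply, Finsupp.single_eq_same]
      cases h : s i with
      | zero => simp
      | succ m =>
        rw [Nat.succ_sub_one, Nat.succ_descFactorial_succ]
        push_cast
        ring
  

lemma prod_X_pow_eq (t : Finset (Fin n)) (f : Fin n → ℕ) :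
    (∏ i ∈ t, (X i : MvPolynomial (Fin n) R) ^ f i)
      = monomial (∑ i ∈ t, Finsupp.single i (f i)) 1 := by
  classical
  induction t using Finset.induction with
  | empty => simp [monomial_zero']
  | insert j t hj ih =>
    rw [Finset.prod_insert hj, Finset.sum_insert hj, ih, X_pow_eq_monomial, monomial_mul, one_mul]

lemma fold_pderiv_monomial (α : Fin n → ℕ) (l : List (Fin n)) (hl : l.Nodup)
    (s : Fin n →₀ ℕ) (c : R) :
    (l.map fun i => (⇑(pderiv i))^[α i]).foldr (· ∘ ·) id (monomial s c : MvPolynomial (Fin n) R)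
      = monomial (s - ∑ i ∈ l.toFinset, Finsupp.single i (α i))
          (c * ∏ i ∈ l.toFinset, ((s i).descFactorial (α i) : R)) := by
  classical
  induction l with
  | nil => simp
  | cons j l ih =>
    have hj : j ∉ l := (List.nodup_cons.mp hl).1
    have hj' : j ∉ l.toFinset := by simpa using hj
    simp only [List.map_cons, List.foldr_cons, Function.comp_apply]
    rw [ih (List.nodup_cons.mp hl).2, iter_pderiv_monomial]
    have hap : (s - ∑ i ∈ l.toFinset, Finsupp.single i (α i)) j = s j := by
      rw [Finsupp.tsub_apply]
      have : (∑ i ∈ l.toFinset, Finsupp.single i (α i)) j = 0 := by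
        rw [Finset.sum_apply']
        exact Finset.sum_eq_zero fun i hi =>
          Finsupp.single_eq_of_ne (by rintro rfl; exact hj' hi)
      rw [this, Nat.sub_zero]
    rw [hap, List.toFinset_cons, Finset.sum_insert hj', Finset.prod_insert hj', tsub_tsub]
    congr 1
    · rw [add_comm]
    · ring

end aux

lemma prod_eval_coord {n q : ℕ} {M : Type*} [CommMonoid M] (i : Fin n) (g : Fin q → M) :
    ∏ α : Fin n → Fin q, g (α i) = (∏ a : Fin q, g a) ^ q ^ (n - 1) := by
  classical
  calc ∏ α : Fin n → Fin q, g (α i)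
      = ∏ x : Fin q × ({ j : Fin n // j ≠ i } → Fin q),
          g (((Equiv.funSplitAt i (Fin q)).symm x) i) :=
        ((Equiv.funSplitAt i (Fin q)).symm.prod_comp fun α => g (α i)).symm
    _ = ∏ x : Fin q × ({ j : Fin n // j ≠ i } → Fin q), g x.1 := by
        refine Finset.prod_congr rfl fun x _ => ?_
        congr 1
        simp [Equiv.funSplitAt, Equiv.piSplitAt]
    _ = ∏ a : Fin q, ∏ _f : { j : Fin n // j ≠ i } → Fin q, g a :=
        Fintype.prod_prod_type _
    _ = ∏ a : Fin q, g a ^ q ^ (n - 1) := by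
        refine Finset.prod_congr rfl fun a _ => ?_
        rw [Finset.prod_const, Finset.card_univ, Fintype.card_fun, Fintype.card_fin]
        congr 2
        calc Fintype.card { j : Fin n // j ≠ i }
            = Fintype.card (Fin n) - Fintype.card {j : Fin n // j = i} :=
              Fintype.card_subtype_compl _
          _ = n - 1 := by rw [Fintype.card_fin, Fintype.card_subtype_eq]
    _ = (∏ a : Fin q, g a) ^ q ^ (n - 1) := by rw [Finset.prod_pow]


theorem stmt7 {k : Type*} [Field k] (p : ℕ) (hp : p.Prime) [CharP k p]
    (n : ℕ) (hn : 1 ≤ n) :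
    (Matrix.of fun α β : Fin n → Fin p =>
        (List.ofFn fun i : Fin n => (⇑(pderiv i))^[(α i : ℕ)]).foldr (· ∘ ·) id
          (∏ i : Fin n, (X i : MvPolynomial (Fin n) k) ^ (β i : ℕ))).det =
      C ((∏ j ∈ Finset.Icc 1 (p - 1), (j.factorial : k)) ^ n) := by
  classical
  haveI : Fact p.Prime := ⟨hp⟩
  haveI : WellFoundedLT (Fin n) := Finite.to_wellFoundedLT
  set M : Matrix (Fin n → Fin p) (Fin n → Fin p) (MvPolynomial (Fin n) k) :=
    Matrix.of fun α β : Fin n → Fin p =>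
      (List.ofFn fun i : Fin n => (⇑(pderiv i))^[(α i : ℕ)]).foldr (· ∘ ·) id
        (∏ i : Fin n, (X i : MvPolynomial (Fin n) k) ^ (β i : ℕ)) with hM
  have happ : ∀ (γ : Fin n → Fin p) (j : Fin n),
      (∑ i : Fin n, Finsupp.single i (γ i : ℕ)) j = (γ j : ℕ) := by
    intro γ j
    rw [Finset.sum_apply']
    rw [Finset.sum_eq_single j (fun i _ hne => Finsupp.single_eq_of_ne hne.symm)
      (fun h => absurd (Finset.mem_univ j) h)]
    exact Finsupp.single_eq_same
  have entry : ∀ α β : Fin n → Fin p,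
      M α β = monomial ((∑ i : Fin n, Finsupp.single i (β i : ℕ))
          - ∑ i : Fin n, Finsupp.single i (α i : ℕ))
        (∏ i : Fin n, ((β i : ℕ).descFactorial (α i : ℕ) : k)) := by
    intro α β
    show (List.ofFn fun i : Fin n => (⇑(pderiv i))^[(α i : ℕ)]).foldr (· ∘ ·) id
          (∏ i : Fin n, (X i : MvPolynomial (Fin n) k) ^ (β i : ℕ)) = _
    rw [show (∏ i : Fin n, (X i : MvPolynomial (Fin n) k) ^ (β i : ℕ))
        = monomial (∑ i : Fin n, Finsupp.single i (β i : ℕ)) 1 from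
        prod_X_pow_eq Finset.univ fun i => (β i : ℕ)]
    rw [List.ofFn_eq_map, fold_pderiv_monomial _ _ (List.nodup_finRange n),
      List.toFinset_finRange, one_mul]
    congr 1
    exact Finset.prod_congr rfl fun i _ => by rw [happ]
  have diag : ∀ α : Fin n → Fin p,
      M α α = C (∏ i : Fin n, ((α i : ℕ).factorial : k)) := by
    intro α
    rw [entry, tsub_self, monomial_zero']
    congr 1
    exact Finset.prod_congr rfl fun i _ => by rw [Nat.descFactorial_self]
  letI : LinearOrder (Lex (Fin n → Fin p)) :=
    @Pi.Lex.linearOrder (Fin n) (fun _ => Fin p) _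
      (Finite.to_wellFoundedLT) _
  letI : Fintype (Lex (Fin n → Fin p)) := inferInstanceAs (Fintype (Fin n → Fin p))
  letI : DecidableEq (Lex (Fin n → Fin p)) := inferInstanceAs (DecidableEq (Fin n → Fin p))
  have htri : (M.submatrix ⇑(ofLex (α := Fin n → Fin p)) ⇑ofLex).BlockTriangular id := by
    intro a b hab
    show M (ofLex a) (ofLex b) = 0
    have hex : ∃ i, ((ofLex b) i : ℕ) < ((ofLex a) i : ℕ) := by
      by_contra hcon
      push_neg at hcon
      have hle : ∀ i, (ofLex a) i ≤ (ofLex b) i := fun i => Fin.le_def.mpr (hcon i)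
      exact absurd hab ((Pi.toLex_monotone (β := fun _ : Fin n => Fin p) hle).not_gt)
    obtain ⟨i, hi⟩ := hex
    rw [entry]
    have : (∏ i : Fin n, (((ofLex b) i : ℕ).descFactorial ((ofLex a) i : ℕ) : k)) = 0 :=
      Finset.prod_eq_zero (Finset.mem_univ i) (by
        rw [Nat.descFactorial_eq_zero_iff_lt.mpr hi, Nat.cast_zero])
    rw [this, map_zero]
  rw [← Matrix.det_submatrix_equiv_self (ofLex (α := Fin n → Fin p)) M,
    Matrix.det_of_isUpperTriangular htri]
  have : ∀ a : Lex (Fin n → Fin p),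
      (M.submatrix ⇑(ofLex (α := Fin n → Fin p)) ⇑ofLex) a a
        = C (∏ i : Fin n, (((ofLex a) i : ℕ).factorial : k)) := fun a => diag (ofLex a)
  rw [Finset.prod_congr rfl fun a _ => this a, ← map_prod]
  rw [show (∏ a : Lex (Fin n → Fin p), ∏ i : Fin n, (((ofLex a) i : ℕ).factorial : k))
      = ∏ α : Fin n → Fin p, ∏ i : Fin n, ((α i : ℕ).factorial : k) from
    Equiv.prod_comp (ofLex (α := Fin n → Fin p)) fun α => ∏ i : Fin n, ((α i : ℕ).factorial : k)]
  congr 1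
  -- scalar identity
  set N : ℕ := ∏ a : Fin p, (a : ℕ).factorial with hN
  have h1 : (∏ α : Fin n → Fin p, ∏ i : Fin n, (α i : ℕ).factorial)
      = N ^ (n * p ^ (n - 1)) := by
    rw [Finset.prod_comm]
    rw [Finset.prod_congr rfl fun i (_ : i ∈ Finset.univ) =>
      prod_eval_coord i fun a : Fin p => (a : ℕ).factorial]
    rw [Finset.prod_const, Finset.card_univ, Fintype.card_fin, ← pow_mul, mul_comm]
  have h2 : N = ∏ j ∈ Finset.Icc 1 (p - 1), j.factorial := by
    have hIcc : Finset.Icc 1 (p - 1) = Finset.Ico 1 p := by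
      rw [← Finset.Ico_add_one_right_eq_Icc, Nat.sub_add_cancel hp.one_lt.le]
    rw [hN, Fin.prod_univ_eq_prod_range (fun a => a.factorial) p, hIcc,
      Finset.prod_Ico_eq_prod_range]
    rw [show p = (p - 1) + 1 from (Nat.succ_pred_eq_of_pos hp.pos).symm,
      Finset.prod_range_succ']
    simp [Nat.add_comm]
  have hmod : N ^ p ^ (n - 1) ≡ N [MOD p] := by
    have : ((N ^ p ^ (n - 1) : ℕ) : ZMod p) = ((N : ℕ) : ZMod p) := by
      push_cast
      exact ZMod.pow_card_pow _
    exact (ZMod.natCast_eq_natCast_iff _ _ _).mp this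
  calc (∏ α : Fin n → Fin p, ∏ i : Fin n, ((α i : ℕ).factorial : k))
      = ((∏ α : Fin n → Fin p, ∏ i : Fin n, (α i : ℕ).factorial : ℕ) : k) := by
        push_cast; rfl
    _ = ((N ^ (n * p ^ (n - 1)) : ℕ) : k) := by rw [h1]
    _ = (((N ^ p ^ (n - 1) : ℕ) : k)) ^ n := by push_cast; rw [← pow_mul, mul_comm]
    _ = ((N : ℕ) : k) ^ n := by rw [CharP.natCast_eq_natCast' k p hmod]
    _ = (∏ j ∈ Finset.Icc 1 (p - 1), (j.factorial : k)) ^ n := by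
        rw [h2]; push_cast; rfl
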